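/- Let E = F[β] be a finite separable extension of the field F of degree n, with β ∈ E^×, and let A(E) = End_F(E). Then A(E) = ad_β(A(E)) ⊕ E, where ad_β(u) = βu − uβ and E ⊂ A(E) is the subalgebra of multiplication operators. -/

import Mathlib

/-- Let `E = F[β]` be a finite separable field extension of `F` of degree
`n`, with `β ∈ E^×`, and let `A(E) = End_F(E)`.  Then `A(E) = ad_β(A(E)) ⊕ E`, where
`ad_β(u) = βu - uβ` (with `β` acting as the multiplication operator `lmul β`) and
`E ⊆ A(E)` is the subalgebra of multiplication operators (the range of `lmul`). -/
theorem statement14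
    (F E : Type*) [Field F] [Field E] [Algebra F E] [FiniteDimensional F E]
    [Algebra.IsSeparable F E]
    (β : E) (hβ0 : β ≠ 0) (hβgen : Algebra.adjoin F ({β} : Set E) = ⊤) :
    IsCompl
      (LinearMap.range
        (LinearMap.mulLeft F (Algebra.lmul F E β) - LinearMap.mulRight F (Algebra.lmul F E β)))
      (LinearMap.range (Algebra.lmul F E).toLinearMap) := by
  set L : E →ₐ[F] Module.End F E := Algebra.lmul F E with hL
  set M : Module.End F E := L β with hM
  set ad : Module.End F (Module.End F E) :=
    LinearMap.mulLeft F M - LinearMap.mulRight F M with had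
  have had_apply : ∀ u : Module.End F E, ad u = M * u - u * M := by
    intro u
    simp [had, LinearMap.sub_apply, LinearMap.mulLeft_apply, LinearMap.mulRight_apply]
  have hLcomm : ∀ c : E, L c * M = M * L c := by
    intro c
    rw [hM, ← map_mul, ← map_mul, mul_comm]
  -- Disjointness via the nondegenerate trace form
  have hdisj : Disjoint
      (LinearMap.range ad) (LinearMap.range L.toLinearMap) := by
    rw [Submodule.disjoint_def]
    rintro f hf1 hf2
    obtain ⟨u, hu⟩ := hf1
    obtain ⟨c, hc⟩ := hf2
    have hc0 : c = 0 := by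
      apply (traceForm_nondegenerate F E).1 c
      intro x
      rw [Algebra.traceForm_apply, Algebra.trace_apply]
      have key : LinearMap.trace F E ((M * u - u * M) * L x) = 0 := by
        have e : (M * u - u * M) * L x = M * (u * L x) - u * (L x * M) := by
          rw [hLcomm x]; simp only [sub_mul, mul_assoc]
        rw [e, map_sub, LinearMap.trace_mul_comm, mul_assoc, sub_self]
      have h2 : Algebra.lmul F E (c * x) = (M * u - u * M) * L x := by
        rw [map_mul]
        congr 1
        rw [show (Algebra.lmul F E) c = f from hc, ← hu, had_apply]
      rw [h2]
      exact key
    rw [← hc, hc0, map_zero]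
  -- The kernel of `ad` is the range of `lmul`
  have hker : LinearMap.ker ad = LinearMap.range L.toLinearMap := by
    apply le_antisymm
    · intro u hu
      have huM : M * u = u * M := by
        have := had_apply u
        rw [LinearMap.mem_ker.mp hu] at this
        exact (sub_eq_zero.mp this.symm)
      have hcomm : ∀ c : E, L c * u = u * L c := by
        intro c
        have hmem : c ∈ Algebra.adjoin F ({β} : Set E) := by rw [hβgen]; trivial
        induction hmem using Algebra.adjoin_induction with
        | mem x hx =>
          rw [Set.eq_of_mem_singleton hx]
          exact huM
        | algebraMap r =>
          have : L (algebraMap F E r) = algebraMap F (Module.End F E) r := by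
            simp [hL]
          rw [this, Algebra.commutes]
        | add x y _ _ hx hy => rw [map_add, add_mul, mul_add, hx, hy]
        | mul x y _ _ hx hy =>
          rw [map_mul, mul_assoc, hy, ← mul_assoc, hx, mul_assoc]
      refine ⟨u 1, ?_⟩
      ext x
      have := congrArg (fun g : Module.End F E => g 1) (hcomm x)
      simpa [hL, mul_one, mul_comm] using this
    · rintro _ ⟨c, rfl⟩
      rw [LinearMap.mem_ker, had_apply]
      rw [show (L.toLinearMap c : Module.End F E) = L c from rfl, hLcomm c, sub_self]
  -- dimension count
  refine ⟨hdisj, ?_⟩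
  rw [codisjoint_iff]
  apply Submodule.eq_top_of_finrank_eq
  have h1 := Submodule.finrank_sup_add_finrank_inf_eq
    (LinearMap.range ad) (LinearMap.range L.toLinearMap)
  rw [disjoint_iff.mp hdisj, finrank_bot, add_zero] at h1
  rw [h1, ← hker]
  exact LinearMap.finrank_range_add_finrank_ker ad
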